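/- Let Q and P be finite nonempty posets and suppose Q has a unique maximal element or a unique minimal element. Then the height of the ideal L(Q,P) in k[x_{Q×P}] equals |P|, and the minimal primes of L(Q,P) of height |P| are precisely the ideals p_ψ = ({x_{(ψ(p),p)} : p ∈ P}) where ψ ranges over the isotone maps P → Q. In particular L(Q,P) ⊆ p_ψ for every isotone ψ : P → Q, and each p_ψ is a minimal prime of L(Q,P). -/

import Mathlib

open MvPolynomial

/-- The height of an ideal: the infimum of the heights (in the prime spectrum,
ordered by inclusion) of the prime ideals containing it. -/
noncomputable def idealHeight {R : Type*} [CommRing R] (I : Ideal R) : ℕ∞ :=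
  ⨅ p : {p : PrimeSpectrum R // I ≤ p.asIdeal}, Order.height p.1

namespace LPaux

theorem idealHeight_le_height {R : Type*} [CommRing R] {I : Ideal R} (p : PrimeSpectrum R)
    (h : I ≤ p.asIdeal) : idealHeight I ≤ Order.height p :=
  iInf_le (fun p : {p : PrimeSpectrum R // I ≤ p.asIdeal} => Order.height p.1) ⟨p, h⟩

theorem le_idealHeight {R : Type*} [CommRing R] {I : Ideal R} {n : ℕ∞}
    (h : ∀ p : PrimeSpectrum R, I ≤ p.asIdeal → n ≤ Order.height p) : n ≤ idealHeight I :=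
  le_iInf fun p => h p.1 p.2

theorem idealHeight_of_isPrime {R : Type*} [CommRing R] {I : Ideal R} (h : I.IsPrime) :
    idealHeight I = Order.height (⟨I, h⟩ : PrimeSpectrum R) := by
  apply le_antisymm
  · exact idealHeight_le_height _ le_rfl
  · refine le_idealHeight fun p hp => ?_
    exact Order.height_mono ((PrimeSpectrum.asIdeal_le_asIdeal _ _).mp hp)


variable {k : Type*} [Field k] {σ : Type*}

noncomputable def spanX (k : Type*) [Field k] (V : Set σ) : Ideal (MvPolynomial σ k) :=
  Ideal.span ((fun v => (X v : MvPolynomial σ k)) '' V)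

open scoped Classical in
noncomputable def kill (k : Type*) [Field k] (V : Set σ) :
    MvPolynomial σ k →ₐ[k] MvPolynomial σ k :=
  aeval (fun v => if v ∈ V then 0 else X v)

theorem kill_X_mem {V : Set σ} {v : σ} (hv : v ∈ V) : kill k V (X v) = 0 := by
  classical
  simp [kill, hv]

theorem kill_X_not_mem {V : Set σ} {v : σ} (hv : v ∉ V) : kill k V (X v) = X v := by
  classical
  simp [kill, hv]

theorem X_mem_spanX (V : Set σ) {v : σ} (hv : v ∈ V) : (X v : MvPolynomial σ k) ∈ spanX k V :=
  Ideal.subset_span ⟨v, hv, rfl⟩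

theorem sub_kill_mem (V : Set σ) (f : MvPolynomial σ k) : f - kill k V f ∈ spanX k V := by
  classical
  induction f using MvPolynomial.induction_on with
  | C a => simp [kill]
  | add p q hp hq =>
      have : p + q - kill k V (p + q) = (p - kill k V p) + (q - kill k V q) := by
        rw [map_add]; ring
      rw [this]; exact add_mem hp hq
  | mul_X p v hp =>
      rw [map_mul]
      by_cases hv : v ∈ V
      · rw [kill_X_mem hv, mul_zero, sub_zero]
        exact Ideal.mul_mem_left _ _ (X_mem_spanX V hv)
      · rw [kill_X_not_mem hv]
        have : p * X v - kill k V p * X v = (p - kill k V p) * X v := by ring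
        rw [this]
        exact Ideal.mul_mem_right _ _ hp

theorem spanX_eq_ker (V : Set σ) :
    spanX k V = RingHom.ker (kill k V : MvPolynomial σ k →ₐ[k] MvPolynomial σ k) := by
  apply le_antisymm
  · rw [spanX, Ideal.span_le]
    rintro _ ⟨v, hv, rfl⟩
    simp [RingHom.mem_ker, kill_X_mem hv]
  · intro f hf
    rw [RingHom.mem_ker] at hf
    have := sub_kill_mem V f
    rwa [hf, sub_zero] at this

theorem spanX_isPrime (V : Set σ) : (spanX k V).IsPrime := by
  rw [spanX_eq_ker]
  exact RingHom.ker_isPrime _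

theorem X_mem_spanX_iff {V : Set σ} {w : σ} :
    (X w : MvPolynomial σ k) ∈ spanX k V ↔ w ∈ V := by
  constructor
  · intro h
    by_contra hw
    rw [spanX_eq_ker, RingHom.mem_ker, kill_X_not_mem hw] at h
    exact X_ne_zero w h
  · exact X_mem_spanX V

theorem spanX_mono {V W : Set σ} (h : V ⊆ W) : spanX k V ≤ spanX k W :=
  Ideal.span_mono (Set.image_mono h)

theorem spanX_lt_of_ssubset {V W : Set σ} (h : V ⊆ W) {w : σ} (hw : w ∈ W) (hw' : w ∉ V) :
    spanX k V < spanX k W := by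
  refine lt_of_le_of_ne (spanX_mono h) (fun he => hw' ?_)
  rw [← @X_mem_spanX_iff k _ σ V w, he]
  exact X_mem_spanX W hw

theorem le_height_of_X_mem (𝔮 : PrimeSpectrum (MvPolynomial σ k)) (T : Finset σ)
    (hT : ∀ v ∈ T, X v ∈ 𝔮.asIdeal) : (T.card : ℕ∞) ≤ Order.height 𝔮 := by
  classical
  set t := T.card with ht
  set e : Fin t ≃ {x // x ∈ T} := T.equivFin.symm with he
  set ε : Fin t → σ := fun i => (e i : σ) with hε
  have hεInj : Function.Injective ε := fun i j hij => e.injective (Subtype.ext hij)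
  have hεT : ∀ i, ε i ∈ T := fun i => (e i).2
  set S : ℕ → Set σ := fun j => ε '' {i | (i : ℕ) < j} with hS
  have hspanle : ∀ j, spanX k (S j) ≤ 𝔮.asIdeal := by
    intro j
    rw [spanX, Ideal.span_le]
    rintro _ ⟨_, ⟨i, _, rfl⟩, rfl⟩
    exact hT _ (hεT i)
  have hnotmem : ∀ i : Fin t, ε i ∉ S i := by
    rintro i ⟨i', hi', hieq⟩
    rw [hεInj hieq] at hi'
    have h2 : (i : ℕ) < (i : ℕ) := hi'
    exact absurd h2 (lt_irrefl _)
  set F : ℕ → PrimeSpectrum (MvPolynomial σ k) := fun j =>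
    if h : j < t then ⟨spanX k (S j), spanX_isPrime _⟩ else 𝔮 with hF
  have hFlt : ∀ j, j < t → F j = ⟨spanX k (S j), spanX_isPrime _⟩ := fun j h => dif_pos h
  have hFge : ∀ j, ¬ j < t → F j = 𝔮 := fun j h => dif_neg h
  have hstep : ∀ i : Fin t, F i < F (i + 1 : ℕ) := by
    intro i
    have hi : (i : ℕ) < t := i.2
    rw [hFlt _ hi]
    by_cases h1 : (i : ℕ) + 1 < t
    · rw [hFlt _ h1, ← PrimeSpectrum.asIdeal_lt_asIdeal]
      show spanX k (S (i : ℕ)) < spanX k (S ((i : ℕ) + 1))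
      refine spanX_lt_of_ssubset ?_ (⟨i, by simp, rfl⟩ : ε i ∈ S ((i : ℕ) + 1)) (hnotmem i)
      exact Set.image_mono (fun x hx => lt_trans hx (Nat.lt_succ_self _))
    · rw [hFge _ h1, ← PrimeSpectrum.asIdeal_lt_asIdeal]
      show spanX k (S (i : ℕ)) < 𝔮.asIdeal
      refine lt_of_le_of_ne (hspanle i) (fun he2 => ?_)
      have : (X (ε i) : MvPolynomial σ k) ∈ spanX k (S i) := by
        rw [he2]; exact hT _ (hεT i)
      exact hnotmem i (X_mem_spanX_iff.mp this)
  set ser : LTSeries (PrimeSpectrum (MvPolynomial σ k)) :=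
    ⟨t, fun j => F j, by
      intro i
      show F ((i.castSucc : Fin (t + 1)) : ℕ) < F ((i.succ : Fin (t + 1)) : ℕ)
      have h1 : ((i.castSucc : Fin (t + 1)) : ℕ) = (i : ℕ) := rfl
      have h2 : ((i.succ : Fin (t + 1)) : ℕ) = (i : ℕ) + 1 := rfl
      rw [h1, h2]
      exact hstep i⟩ with hser
  have hlast : ser.last = 𝔮 := by
    show F ((Fin.last t : Fin (t + 1)) : ℕ) = 𝔮
    rw [Fin.val_last]
    exact hFge _ (lt_irrefl t)
  have := Order.length_le_height_last (p := ser)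
  rwa [hlast] at this

theorem fix_of_le {P : Type*} [PartialOrder P] [Finite P] {g : P → P} (hg : Monotone g)
    {a : P} (ha : g a ≤ a) : ∃ p, g p = p := by
  have hdec : ∀ j : ℕ, g^[j + 1] a ≤ g^[j] a := by
    intro j
    induction j with
    | zero => simpa using ha
    | succ j ih =>
        calc g^[j + 1 + 1] a = g (g^[j + 1] a) := Function.iterate_succ_apply' g _ a
          _ ≤ g (g^[j] a) := hg ih
          _ = g^[j + 1] a := (Function.iterate_succ_apply' g _ a).symm
  have hanti : Antitone fun j : ℕ => g^[j] a := antitone_nat_of_succ_le hdec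
  obtain ⟨i, j, hij, hgij⟩ := Finite.exists_ne_map_eq_of_infinite fun j : ℕ => g^[j] a
  rcases lt_or_gt_of_ne hij with h | h
  · refine ⟨g^[i] a, ?_⟩
    calc g (g^[i] a) = g^[i + 1] a := (Function.iterate_succ_apply' g _ a).symm
      _ = g^[i] a := le_antisymm (hdec i)
        (hgij.le.trans (hanti (Nat.succ_le_of_lt h) : g^[j] a ≤ g^[i + 1] a))
  · refine ⟨g^[j] a, ?_⟩
    calc g (g^[j] a) = g^[j + 1] a := (Function.iterate_succ_apply' g _ a).symm
      _ = g^[j] a := le_antisymm (hdec j)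
        (hgij.ge.trans (hanti (Nat.succ_le_of_lt h) : g^[i] a ≤ g^[j + 1] a))

theorem exists_fixedPoint {Q P : Type*} [PartialOrder Q] [Fintype Q] [Nonempty Q]
    [PartialOrder P] [Fintype P]
    (hQ : (∃! m : Q, IsMax m) ∨ (∃! m : Q, IsMin m))
    {φ : Q → P} {ψ : P → Q} (hφ : Monotone φ) (hψ : Monotone ψ) :
    ∃ p, φ (ψ p) = p := by
  have hg : Monotone (φ ∘ ψ) := hφ.comp hψ
  rcases hQ with ⟨m, _, hu⟩ | ⟨m, _, hu⟩
  · have hm : ∀ q : Q, q ≤ m := by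
      intro q
      obtain ⟨b, hqb, hbmax⟩ := Finite.exists_le_maximal (p := fun _ : Q => True) trivial
      have : IsMax b := fun c hc => hbmax.2 trivial hc
      exact (hu b this) ▸ hqb
    exact fix_of_le hg (hφ (hm (ψ (φ m))))
  · have hm : ∀ q : Q, m ≤ q := by
      intro q
      obtain ⟨b, hqb, hbmin⟩ := Finite.exists_le_minimal (p := fun _ : Q => True) trivial
      have : IsMin b := fun c hc => hbmin.2 trivial hc
      exact (hu b this) ▸ hqb
    have ha : φ m ≤ (φ ∘ ψ) (φ m) := hφ (hm (ψ (φ m)))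
    obtain ⟨p, hp⟩ := fix_of_le (P := Pᵒᵈ) hg.dual (a := OrderDual.toDual (φ m)) ha
    exact ⟨OrderDual.ofDual p, hp⟩



theorem chain_eval_not_mem {A : Type*} [CommRing A] [IsDomain A] :
    ∀ (m : ℕ) (q : Fin (m + 1) → Ideal A), (∀ i, (q i).IsPrime) → StrictMono q →
      ∀ (y : Fin m → A), (∀ i : Fin m, y i ∈ q i.succ) → (∀ i : Fin m, y i ∉ q i.castSucc) →
        ∀ (F : MvPolynomial (Fin m) A), F ≠ 0 →
          (∀ d, coeff d F ≠ 0 → coeff d F ∉ q (Fin.last m)) →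
          eval y F ∉ q 0 := by
  intro m
  induction m with
  | zero =>
      intro q hprime hmono y hy1 hy2 F hF hc
      have h0 : F = C (coeff 0 F) := eq_C_of_isEmpty F
      have hne : coeff 0 F ≠ 0 := fun h => hF (by rw [h0, h, map_zero])
      have := hc 0 hne
      rw [h0, eval_C]
      exact this
  | succ m ih =>
      intro q hprime hmono y hy1 hy2 F hF hc
      -- translate to a polynomial in the first variable
      set P : Polynomial (MvPolynomial (Fin m) A) := finSuccEquiv A m F with hP
      have hPne : P ≠ 0 := by
        intro h
        exact hF ((finSuccEquiv A m).injective (by rw [map_zero]; exact h))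
      set t := P.natTrailingDegree with htdef
      obtain ⟨Q, hQ⟩ : (Polynomial.X : Polynomial (MvPolynomial (Fin m) A)) ^ t ∣ P :=
        Polynomial.X_pow_dvd_iff.mpr fun d hd =>
          Polynomial.coeff_eq_zero_of_lt_natTrailingDegree hd
      have hQ0 : Q.coeff 0 = P.coeff t := by
        rw [hQ]
        have := Polynomial.coeff_X_pow_mul Q t 0
        rw [zero_add] at this
        exact this.symm
      have hQ0ne : Q.coeff 0 ≠ 0 := by
        rw [hQ0]
        exact Polynomial.trailingCoeff_nonzero_iff_nonzero.mpr hPne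
      -- the evaluation of F
      have hyc : (Fin.cons (y 0) (Fin.tail y) : Fin (m + 1) → A) = y := Fin.cons_self_tail y
      have heval : eval y F =
          Polynomial.eval (y 0) (P.map (eval (Fin.tail y))) := by
        have h2 := eval_eq_eval_mv_eval' (Fin.tail y) (y 0) F
        rw [hyc] at h2
        exact h2
      set g : MvPolynomial (Fin m) A →+* A := (eval (Fin.tail y) : MvPolynomial (Fin m) A →+* A)
        with hg
      set E : A := eval (Fin.tail y) (Q.coeff 0) with hE
      set r : A := Polynomial.eval (y 0) (Polynomial.divX (Q.map g)) with hr
      have heval2 : eval y F = y 0 ^ t * (y 0 * r + E) := by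
        rw [heval, hQ, Polynomial.map_mul, Polynomial.map_pow, Polynomial.map_X,
          Polynomial.eval_mul, Polynomial.eval_pow, Polynomial.eval_X]
        congr 1
        conv_lhs => rw [← Polynomial.X_mul_divX_add (Q.map g)]
        rw [Polynomial.eval_add, Polynomial.eval_mul, Polynomial.eval_X, Polynomial.eval_C,
          Polynomial.coeff_map]
      -- apply the induction hypothesis to Q.coeff 0
      have hEq1 : E ∉ q 1 := by
        have := ih (fun i => q i.succ) (fun i => hprime _)
          (fun i j hij => hmono (Fin.succ_lt_succ_iff.mpr hij))
          (Fin.tail y)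
          (fun i => hy1 i.succ)
          (fun i => by
            show y i.succ ∉ q i.castSucc.succ
            rw [Fin.succ_castSucc]
            exact hy2 i.succ)
          (Q.coeff 0) hQ0ne
          (fun d hd => by
            have hcoe : coeff d (Q.coeff 0) = coeff (d.cons t) F := by
              rw [hQ0]
              exact finSuccEquiv_coeff_coeff d F t
            rw [hcoe] at hd ⊢
            have h3 := hc (d.cons t) hd
            show coeff (d.cons t) F ∉ q (Fin.last m).succ
            rwa [Fin.succ_last])
        simpa using this
      -- now conclude
      intro hmem
      rw [heval2] at hmem
      have h01 : q 0 ≤ q 1 := le_of_lt (hmono (by exact Fin.one_pos'.trans_le le_rfl))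
      rcases (hprime 0).mem_or_mem hmem with h | h
      · have : y 0 ∈ q 0 := (hprime 0).mem_of_pow_mem t h
        exact hy2 0 (by rwa [Fin.castSucc_zero'])
      · have hy01 : y 0 ∈ q 1 := by
          have := hy1 0
          rwa [Fin.succ_zero_eq_one'] at this
        have : E ∈ q 1 := by
          have hsub : E = (y 0 * r + E) - y 0 * r := by ring
          rw [hsub]
          exact sub_mem (h01 h) (Ideal.mul_mem_right _ _ hy01)
        exact hEq1 this



theorem exists_annihilator_aux {C : Type*} [CommRing C] [IsDomain C]
    (K : Type*) [Field K] [Algebra C K] [IsFractionRing C K] (n : ℕ)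
    (y : Fin (n + 1) → MvPolynomial (Fin n) C) :
    ∃ F : MvPolynomial (Fin (n + 1)) C, F ≠ 0 ∧ aeval y F = 0 := by
  classical
  set D : ℕ := Finset.univ.sup fun i => (y i).totalDegree with hD
  set d : ℕ := ((n + 1) * (D + 1)) ^ n + 1 with hd
  have hd1 : 1 ≤ d := Nat.le_add_left _ _
  set N : ℕ := (n + 1) * d * D with hN
  set φ : MvPolynomial (Fin n) C →+* MvPolynomial (Fin n) K :=
    (MvPolynomial.map (algebraMap C K)) with hφ
  have hφinj : Function.Injective φ :=
    MvPolynomial.map_injective _ (IsFractionRing.injective C K)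
  set yK : Fin (n + 1) → MvPolynomial (Fin n) K := fun i => φ (y i) with hyK
  set v : (Fin (n + 1) → Fin d) → MvPolynomial (Fin n) K := fun β => ∏ i, yK i ^ (β i : ℕ) with hv
  -- total degree bound
  have hdeg : ∀ β, (v β).totalDegree ≤ N := by
    intro β
    refine le_trans (totalDegree_finset_prod _ _) ?_
    have h1 : ∀ i : Fin (n + 1), (yK i ^ (β i : ℕ)).totalDegree ≤ d * D := by
      intro i
      refine le_trans (totalDegree_pow _ _) ?_
      have h3 : (y i).totalDegree ≤ D :=
        Finset.le_sup (f := fun i => (y i).totalDegree) (Finset.mem_univ i)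
      have h2' : (yK i).totalDegree ≤ (y i).totalDegree :=
        Finset.sup_mono (support_map_subset (algebraMap C K) (y i))
      have h2 : (yK i).totalDegree ≤ D := le_trans h2' h3
      exact Nat.mul_le_mul (le_of_lt (β i).2) h2
    calc ∑ i, (yK i ^ (β i : ℕ)).totalDegree ≤ ∑ _i : Fin (n + 1), d * D :=
          Finset.sum_le_sum fun i _ => h1 i
      _ = (n + 1) * (d * D) := by simp [Finset.sum_const, mul_comm]
      _ = N := by rw [hN]; ring
  -- the spanning monomials
  set gmon : (Fin n → Fin (N + 1)) → MvPolynomial (Fin n) K := fun e =>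
    monomial (Finsupp.equivFunOnFinite.symm fun i => (e i : ℕ)) 1 with hgmon
  have hspanN : ∀ p : MvPolynomial (Fin n) K, p.totalDegree ≤ N →
      p ∈ Submodule.span K (Set.range gmon) := by
    intro p hp
    have hps : p = ∑ u ∈ p.support, monomial u (coeff u p) := p.as_sum
    rw [hps]
    refine Submodule.sum_mem _ fun u hu => ?_
    have hub : ∀ i, u i ≤ N := by
      intro i
      have h4 : u i ≤ u.sum fun _ e => e := by
        by_cases hi : i ∈ u.support
        · exact Finset.single_le_sum (fun _ _ => Nat.zero_le _) hi
        · simp [Finsupp.notMem_support_iff.mp hi]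
      exact le_trans h4 (le_trans (MvPolynomial.le_totalDegree hu) hp)
    have heq : monomial u (coeff u p) =
        (coeff u p) • gmon (fun i => ⟨u i, Nat.lt_succ_of_le (hub i)⟩) := by
      rw [hgmon]
      simp only [smul_monomial, smul_eq_mul, mul_one]
      congr 1
      ext i
      simp
    rw [heq]
    exact Submodule.smul_mem _ _ (Submodule.subset_span (Set.mem_range_self _))
  -- not linearly independent by counting
  have hnli : ¬ LinearIndependent K v := by
    intro h
    set W := Submodule.span K (Set.range gmon) with hW
    haveI : FiniteDimensional K W := FiniteDimensional.span_of_finite K (Set.finite_range gmon)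
    set v' : (Fin (n + 1) → Fin d) → W := fun β => ⟨v β, hspanN _ (hdeg β)⟩ with hv'
    have h' : LinearIndependent K v' := by
      refine LinearIndependent.of_comp W.subtype ?_
      convert h
      rfl
    have hcard := h'.fintype_card_le_finrank
    have hrank : Module.finrank K W ≤ (N + 1) ^ n := by
      refine le_trans (finrank_span_le_card _) ?_
      rw [Set.toFinset_range]
      refine le_trans (Finset.card_image_le) ?_
      simp
    have hcardeq : Fintype.card (Fin (n + 1) → Fin d) = d ^ (n + 1) := by simp
    -- arithmetic contradiction
    have harith : (N + 1) ^ n < d ^ (n + 1) := by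
      have h5 : N + 1 ≤ d * ((n + 1) * (D + 1)) := by
        have h6 : (n + 1) * (D + 1) = (n + 1) * D + (n + 1) := by ring
        have h7 : (n + 1) * D + 1 ≤ (n + 1) * (D + 1) := by omega
        calc N + 1 = (n + 1) * d * D + 1 := by rw [hN]
          _ ≤ (n + 1) * d * D + d := by omega
          _ = d * ((n + 1) * D + 1) := by ring
          _ ≤ d * ((n + 1) * (D + 1)) := Nat.mul_le_mul_left d h7
      calc (N + 1) ^ n ≤ (d * ((n + 1) * (D + 1))) ^ n := Nat.pow_le_pow_left h5 n
        _ = d ^ n * ((n + 1) * (D + 1)) ^ n := by rw [mul_pow]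
        _ < d ^ n * d := by
            have hdpos : 0 < d ^ n := Nat.pow_pos (by omega)
            have h8 : ((n + 1) * (D + 1)) ^ n < d := by omega
            exact mul_lt_mul_of_pos_left h8 hdpos
        _ = d ^ (n + 1) := by ring
    omega
  rw [Fintype.not_linearIndependent_iff] at hnli
  obtain ⟨gc, hsum, i0, hi0⟩ := hnli
  -- clear denominators
  obtain ⟨b, hb⟩ := IsLocalization.exist_integer_multiples (nonZeroDivisors C) Finset.univ gc
  choose c hc using fun β => hb β (Finset.mem_univ β)
  -- exponents
  set η : (Fin (n + 1) → Fin d) → (Fin (n + 1) →₀ ℕ) := fun β =>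
    Finsupp.equivFunOnFinite.symm fun i => (β i : ℕ) with hη
  have hηap : ∀ β i, η β i = (β i : ℕ) := by intro β i; simp [hη]
  have hηinj : Function.Injective η := by
    intro β β' h
    funext i
    have h2 := congrArg (fun f => f i) h
    simp only [hηap] at h2
    exact Fin.ext (by simpa [hη] using h2)
  set F : MvPolynomial (Fin (n + 1)) C := ∑ β : (Fin (n + 1) → Fin d), monomial (η β) (c β) with hF
  have hbne : algebraMap C K (b : C) ≠ 0 := fun hb0 =>
    nonZeroDivisors.ne_zero b.2 (IsFractionRing.injective C K (by rwa [map_zero]))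
  have hcne : c i0 ≠ 0 := by
    intro h0
    have h1 : algebraMap C K (c i0) = (b : C) • gc i0 := hc i0
    rw [h0, map_zero, Algebra.smul_def] at h1
    rcases mul_eq_zero.mp h1.symm with h | h
    · exact hbne h
    · exact hi0 h
  refine ⟨F, ?_, ?_⟩
  · intro h0
    have hcoeff : coeff (η i0) F = c i0 := by
      rw [hF, MvPolynomial.coeff_sum]
      rw [Finset.sum_eq_single i0]
      · simp [MvPolynomial.coeff_monomial]
      · intro β _ hβ
        rw [MvPolynomial.coeff_monomial, if_neg (fun he => hβ (hηinj he))]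
      · intro h; exact absurd (Finset.mem_univ i0) h
    rw [h0] at hcoeff
    simp at hcoeff
    exact hcne hcoeff.symm
  · apply hφinj
    rw [map_zero]
    have haev : ∀ β, aeval y (monomial (η β) (c β)) =
        MvPolynomial.C (c β) * ∏ i, y i ^ (β i : ℕ) := by
      intro β
      rw [aeval_monomial, MvPolynomial.algebraMap_eq]
      congr 1
      rw [Finsupp.prod_pow]
      exact Finset.prod_congr rfl fun i _ => by rw [hηap]
    have hφF : φ (aeval y F) = ∑ β, MvPolynomial.C (algebraMap C K (c β)) * v β := by
      rw [hF, map_sum, map_sum]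
      refine Finset.sum_congr rfl fun β _ => ?_
      rw [haev β, map_mul, MvPolynomial.map_C, hv]
      congr 1
      rw [map_prod]
      exact Finset.prod_congr rfl fun i _ => by rw [map_pow]
    rw [hφF]
    have hrw : ∀ β, MvPolynomial.C (algebraMap C K (c β)) * v β =
        MvPolynomial.C (algebraMap C K (b : C)) * (gc β • v β) := by
      intro β
      rw [hc β, Algebra.smul_def, map_mul, smul_eq_C_mul]
      ring
    rw [Finset.sum_congr rfl fun β _ => hrw β, ← Finset.mul_sum, hsum, mul_zero]

theorem exists_annihilator {C : Type*} [CommRing C] [IsDomain C] (n : ℕ)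
    (y : Fin (n + 1) → MvPolynomial (Fin n) C) :
    ∃ F : MvPolynomial (Fin (n + 1)) C, F ≠ 0 ∧ aeval y F = 0 :=
  exists_annihilator_aux (FractionRing C) n y

noncomputable def primeSpectrumOrderIso {R S : Type*} [CommRing R] [CommRing S] (e : R ≃+* S) :
    PrimeSpectrum R ≃o PrimeSpectrum S where
  toFun p := ⟨p.asIdeal.comap (e.symm : S →+* R), Ideal.comap_isPrime _ _⟩
  invFun p := ⟨p.asIdeal.comap (e : R →+* S), Ideal.comap_isPrime _ _⟩
  left_inv p := by
    ext x
    simp only [Ideal.mem_comap, RingEquiv.coe_toRingHom, RingEquiv.symm_apply_apply]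
  right_inv p := by
    ext x
    simp only [Ideal.mem_comap, RingEquiv.coe_toRingHom, RingEquiv.apply_symm_apply]
  map_rel_iff' := by
    intro p q
    rw [← PrimeSpectrum.asIdeal_le_asIdeal, ← PrimeSpectrum.asIdeal_le_asIdeal]
    constructor
    · intro h x hx
      have := @h (e x) (by simpa [Ideal.mem_comap] using hx)
      simpa [Ideal.mem_comap] using this
    · exact fun h => Ideal.comap_mono h

theorem height_le_of_eq_spanRangeX {Co : Type*} [CommRing Co] [IsDomain Co] {n : ℕ}
    (pt : PrimeSpectrum (MvPolynomial (Fin n) Co))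
    (hpt : pt.asIdeal = Ideal.span (Set.range (X : Fin n → MvPolynomial (Fin n) Co))) :
    Order.height pt ≤ (n : ℕ∞) := by
  refine Order.height_le fun s hlast => ?_
  by_contra hlen
  push_neg at hlen
  have hlen' : n + 1 ≤ s.length := by
    have := hlen
    rw [Nat.cast_lt] at this
    omega
  set l := s.length with hl
  have hidxlt : ∀ j : Fin (n + 2), l - (n + 1) + (j : ℕ) < l + 1 := by
    intro j
    have := j.2
    omega
  set idx : Fin (n + 2) → Fin (l + 1) := fun j => ⟨l - (n + 1) + (j : ℕ), hidxlt j⟩ with hidx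
  have hidxmono : StrictMono idx := by
    intro a b hab
    simp only [hidx, Fin.mk_lt_mk]
    have : (a : ℕ) < (b : ℕ) := hab
    omega
  set q : Fin (n + 2) → Ideal (MvPolynomial (Fin n) Co) := fun j => (s (idx j)).asIdeal with hq
  have hqprime : ∀ j, (q j).IsPrime := fun j => (s (idx j)).2
  have hqmono : StrictMono q := by
    intro a b hab
    exact (PrimeSpectrum.asIdeal_lt_asIdeal _ _).mpr (s.strictMono (hidxmono hab))
  have hqlast : q (Fin.last (n + 1)) = pt.asIdeal := by
    have h1 : idx (Fin.last (n + 1)) = Fin.last l := by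
      apply Fin.ext
      simp only [hidx, Fin.val_last]
      omega
    rw [hq]
    simp only [h1]
    rw [show s (Fin.last l) = s.last from rfl, hlast]
  have hy : ∀ i : Fin (n + 1), ∃ a, a ∈ q i.succ ∧ a ∉ q i.castSucc := by
    intro i
    exact SetLike.exists_of_lt (hqmono (Fin.castSucc_lt_succ (i := i)))
  choose y hy1 hy2 using hy
  obtain ⟨F, hFne, hFann⟩ := exists_annihilator n y
  set F' : MvPolynomial (Fin (n + 1)) (MvPolynomial (Fin n) Co) :=
    MvPolynomial.map (MvPolynomial.C : Co →+* MvPolynomial (Fin n) Co) F with hF'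
  have hF'ne : F' ≠ 0 := fun h =>
    hFne (MvPolynomial.map_injective _ (C_injective _ _) (by rw [map_zero]; exact h))
  have hCnotmem : ∀ a : Co, a ≠ 0 →
      (MvPolynomial.C a : MvPolynomial (Fin n) Co) ∉
        Ideal.span (Set.range (X : Fin n → MvPolynomial (Fin n) Co)) := by
    intro a ha hmem
    have hker : Ideal.span (Set.range (X : Fin n → MvPolynomial (Fin n) Co)) ≤
        RingHom.ker (constantCoeff : MvPolynomial (Fin n) Co →+* Co) := by
      rw [Ideal.span_le]
      rintro _ ⟨i, rfl⟩
      simp [RingHom.mem_ker]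
    have := hker hmem
    rw [RingHom.mem_ker, constantCoeff_C] at this
    exact ha this
  have hcoeffcond : ∀ d, coeff d F' ≠ 0 → coeff d F' ∉ q (Fin.last (n + 1)) := by
    intro d hd
    rw [hF', MvPolynomial.coeff_map] at hd ⊢
    rw [hqlast, hpt]
    exact hCnotmem _ (fun h => hd (by rw [h, map_zero]))
  have hchain := chain_eval_not_mem (n + 1) q hqprime hqmono y hy1 hy2 F' hF'ne hcoeffcond
  apply hchain
  have : eval y F' = aeval y F := by
    rw [hF', MvPolynomial.eval_map, aeval_def, MvPolynomial.algebraMap_eq]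
  rw [this, hFann]
  exact Submodule.zero_mem _

theorem height_spanX_le {k : Type*} [Field k] {σ : Type*} (V : Finset σ)
    (pt : PrimeSpectrum (MvPolynomial σ k)) (hpt : pt.asIdeal = spanX k (V : Set σ)) :
    Order.height pt ≤ (V.card : ℕ∞) := by
  classical
  set n := V.card with hn
  set Ω := {v : σ // v ∉ V} with hΩ
  set e1 : σ ≃ (Fin n) ⊕ Ω :=
    ((Equiv.sumCompl (· ∈ V)).symm).trans (Equiv.sumCongr V.equivFin (Equiv.refl Ω)) with he1
  set Φ : MvPolynomial σ k ≃+* MvPolynomial (Fin n) (MvPolynomial Ω k) :=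
    ((renameEquiv k e1).trans (sumAlgEquiv k (Fin n) Ω)).toRingEquiv with hΦ
  have hXin : ∀ (v : σ) (hv : v ∈ V), Φ (X v) = X (V.equivFin ⟨v, hv⟩) := by
    intro v hv
    have h1 : e1 v = Sum.inl (V.equivFin ⟨v, hv⟩) := by
      simp [he1, Equiv.sumCompl_symm_apply_of_pos hv]
    simp [hΦ, h1, sumToIter_Xl]
  have hXout : ∀ i : Fin n, ∃ v ∈ V, Φ (X v) = X i := by
    intro i
    set v := ((V.equivFin.symm i : {x // x ∈ V}) : σ) with hv
    have hvV : v ∈ V := (V.equivFin.symm i).2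
    refine ⟨v, hvV, ?_⟩
    rw [hXin v hvV]
    congr 1
    simp [hv]
  set Θ := primeSpectrumOrderIso Φ with hΘ
  have hheight : Order.height pt = Order.height (Θ pt) := (Order.height_orderIso Θ pt).symm
  rw [hheight]
  refine height_le_of_eq_spanRangeX (Θ pt) ?_
  have h2 : (Θ pt).asIdeal = pt.asIdeal.map (Φ : MvPolynomial σ k →+* _) :=
    Ideal.comap_symm (I := pt.asIdeal) Φ
  rw [h2, hpt, spanX, Ideal.map_span]
  congr 1
  ext f
  constructor
  · rintro ⟨_, ⟨v, hv, rfl⟩, rfl⟩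
    exact ⟨V.equivFin ⟨v, hv⟩, (hXin v hv).symm⟩
  · rintro ⟨i, rfl⟩
    obtain ⟨v, hv, hvΦ⟩ := hXout i
    exact ⟨X v, ⟨v, hv, rfl⟩, hvΦ⟩


end LPaux

theorem letterplace_minimal_primes
    (k : Type*) [Field k]
    {Q P : Type*} [PartialOrder Q] [Fintype Q] [Nonempty Q]
    [PartialOrder P] [Fintype P] [Nonempty P]
    (hQ : (∃! m : Q, IsMax m) ∨ (∃! m : Q, IsMin m))
    (L : Ideal (MvPolynomial (Q × P) k))
    (hL : L = Ideal.span
      { m | ∃ φ : Q → P, Monotone φ ∧ m = ∏ q : Q, X (q, φ q) }) :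
    idealHeight L = (Fintype.card P : ℕ∞)
    ∧ (∀ 𝔭 : Ideal (MvPolynomial (Q × P) k),
        (𝔭 ∈ L.minimalPrimes ∧ idealHeight 𝔭 = (Fintype.card P : ℕ∞)) ↔
          ∃ ψ : P → Q, Monotone ψ ∧
            𝔭 = Ideal.span (Set.range fun p : P => (X (ψ p, p) : MvPolynomial (Q × P) k)))
    ∧ (∀ ψ : P → Q, Monotone ψ →
        L ≤ Ideal.span (Set.range fun p : P => (X (ψ p, p) : MvPolynomial (Q × P) k))
        ∧ Ideal.span (Set.range fun p : P => (X (ψ p, p) : MvPolynomial (Q × P) k))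
            ∈ L.minimalPrimes) := by
  classical
  open LPaux in
  set n := Fintype.card P with hn
  -- notation
  have hspan_eq : ∀ ψ : P → Q,
      Ideal.span (Set.range fun p : P => (X (ψ p, p) : MvPolynomial (Q × P) k)) =
        spanX k (Set.range fun p : P => (ψ p, p)) := by
    intro ψ
    rw [spanX, ← Set.range_comp]
    rfl
  -- membership of generators
  have h_memL : ∀ φ : Q → P, Monotone φ → (∏ q : Q, X (q, φ q) : MvPolynomial (Q × P) k) ∈ L := by
    intro φ hφ
    rw [hL]
    exact Ideal.subset_span ⟨φ, hφ, rfl⟩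
  -- a prime containing L contains a variable from each generator
  have h_primeVar : ∀ (𝔭 : Ideal (MvPolynomial (Q × P) k)), 𝔭.IsPrime → L ≤ 𝔭 →
      ∀ φ : Q → P, Monotone φ → ∃ q : Q, X (q, φ q) ∈ 𝔭 := by
    intro 𝔭 hp hle φ hφ
    have hmem : (∏ q : Q, X (q, φ q) : MvPolynomial (Q × P) k) ∈ 𝔭 := hle (h_memL φ hφ)
    obtain ⟨q, _, hq⟩ := (Ideal.IsPrime.prod_mem_iff (hp := hp)).mp hmem
    exact ⟨q, hq⟩
  have h_cover_snd : ∀ (𝔭 : Ideal (MvPolynomial (Q × P) k)), 𝔭.IsPrime → L ≤ 𝔭 →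
      ∀ p : P, ∃ q : Q, X (q, p) ∈ 𝔭 := by
    intro 𝔭 hp hle p
    exact h_primeVar 𝔭 hp hle (fun _ => p) monotone_const
  -- membership of the letterplace ideal in graph primes (uses hQ)
  have h_L_le : ∀ ψ : P → Q, Monotone ψ →
      L ≤ spanX k (Set.range fun p : P => (ψ p, p)) := by
    intro ψ hψ
    rw [hL, Ideal.span_le]
    rintro _ ⟨φ, hφ, rfl⟩
    obtain ⟨p, hp⟩ := exists_fixedPoint hQ hφ hψ
    have hsplit := Finset.mul_prod_erase Finset.univ
      (fun q : Q => (X (q, φ q) : MvPolynomial (Q × P) k)) (Finset.mem_univ (ψ p))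
    rw [← hsplit]
    refine Ideal.mul_mem_right _ _ ?_
    have : ((ψ p : Q), φ (ψ p)) ∈ Set.range fun p : P => (ψ p, p) := by
      rw [hp]; exact ⟨p, rfl⟩
    exact X_mem_spanX _ this
  -- graph spans are minimal over L
  have h_minimal : ∀ (ψ : P → Q) (𝔭 : Ideal (MvPolynomial (Q × P) k)), 𝔭.IsPrime → L ≤ 𝔭 →
      𝔭 ≤ spanX k (Set.range fun p : P => (ψ p, p)) →
      spanX k (Set.range fun p : P => (ψ p, p)) ≤ 𝔭 := by
    intro ψ 𝔭 hp hle hsub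
    rw [spanX, Ideal.span_le]
    rintro _ ⟨_, ⟨p', rfl⟩, rfl⟩
    obtain ⟨q, hq⟩ := h_cover_snd 𝔭 hp hle p'
    have hmem : ((q : Q), p') ∈ Set.range fun p : P => (ψ p, p) :=
      X_mem_spanX_iff.mp (hsub hq)
    obtain ⟨p'', hp''⟩ := hmem
    have hps : p'' = p' := congrArg Prod.snd hp''
    have hqs : ψ p' = q := by rw [← hps]; exact congrArg Prod.fst hp''
    show (X (ψ p', p') : MvPolynomial (Q × P) k) ∈ 𝔭
    rw [hqs]
    exact hq
  -- heights of graph primes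
  have h_graph_inj : ∀ ψ : P → Q, Function.Injective (fun p : P => (ψ p, p)) := by
    intro ψ a b hab
    exact congrArg Prod.snd hab
  have h_height : ∀ ψ : P → Q,
      Order.height (⟨spanX k (Set.range fun p : P => (ψ p, p)), spanX_isPrime _⟩ :
        PrimeSpectrum (MvPolynomial (Q × P) k)) = (n : ℕ∞) := by
    intro ψ
    set T : Finset (Q × P) := Finset.image (fun p : P => (ψ p, p)) Finset.univ with hT
    have hTcoe : (T : Set (Q × P)) = Set.range fun p : P => (ψ p, p) := by
      rw [hT]
      simp [Set.image_univ]
    have hTcard : T.card = n := by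
      rw [hT, Finset.card_image_of_injective _ (h_graph_inj ψ), Finset.card_univ, hn]
    apply le_antisymm
    · have := height_spanX_le T
        (⟨spanX k (Set.range fun p : P => (ψ p, p)), spanX_isPrime _⟩ :
          PrimeSpectrum (MvPolynomial (Q × P) k)) (by rw [hTcoe])
      rwa [hTcard] at this
    · have := le_height_of_X_mem
        (⟨spanX k (Set.range fun p : P => (ψ p, p)), spanX_isPrime _⟩ :
          PrimeSpectrum (MvPolynomial (Q × P) k)) T
        (fun v hv => X_mem_spanX _ (by rw [← hTcoe]; exact hv))
      rwa [hTcard] at this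
  -- part 3
  have part3 : ∀ ψ : P → Q, Monotone ψ →
      L ≤ Ideal.span (Set.range fun p : P => (X (ψ p, p) : MvPolynomial (Q × P) k))
      ∧ Ideal.span (Set.range fun p : P => (X (ψ p, p) : MvPolynomial (Q × P) k))
          ∈ L.minimalPrimes := by
    intro ψ hψ
    constructor
    · rw [hspan_eq]
      exact h_L_le ψ hψ
    · rw [hspan_eq]
      constructor
      · exact ⟨spanX_isPrime _, h_L_le ψ hψ⟩
      · intro J hJ hJle
        exact h_minimal ψ J hJ.1 hJ.2 hJle
  -- part 1
  have part1 : idealHeight L = (n : ℕ∞) := by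
    apply le_antisymm
    · set ψ0 : P → Q := fun _ => Classical.arbitrary Q with hψ0
      have hle := h_L_le ψ0 monotone_const
      have h1 := idealHeight_le_height
        (⟨spanX k (Set.range fun p : P => (ψ0 p, p)), spanX_isPrime _⟩ :
          PrimeSpectrum (MvPolynomial (Q × P) k)) hle
      rwa [h_height ψ0] at h1
    · refine le_idealHeight fun p hp => ?_
      choose c hc using h_cover_snd p.asIdeal p.2 hp
      set T : Finset (Q × P) := Finset.image (fun p' : P => (c p', p')) Finset.univ with hT
      have hTcard : T.card = n := by
        rw [hT, Finset.card_image_of_injective _ (fun a b hab => congrArg Prod.snd hab),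
          Finset.card_univ, hn]
      have := le_height_of_X_mem p T (by
        intro v hv
        rw [hT] at hv
        obtain ⟨p', _, rfl⟩ := Finset.mem_image.mp hv
        exact hc p')
      rwa [hTcard] at this
  refine ⟨part1, ?_, part3⟩
  -- part 2
  intro 𝔭
  constructor
  · rintro ⟨hmin, hht⟩
    have hp : 𝔭.IsPrime := hmin.1.1
    have hpL : L ≤ 𝔭 := hmin.1.2
    set S : Set (Q × P) := {v | X v ∈ 𝔭} with hS
    have h1 : spanX k S ≤ 𝔭 := by
      rw [spanX, Ideal.span_le]
      rintro _ ⟨v, hv, rfl⟩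
      exact hv
    have h2 : L ≤ spanX k S := by
      rw [hL, Ideal.span_le]
      rintro _ ⟨φ, hφ, rfl⟩
      obtain ⟨q, hq⟩ := h_primeVar 𝔭 hp hpL φ hφ
      have hsplit := Finset.mul_prod_erase Finset.univ
        (fun q : Q => (X (q, φ q) : MvPolynomial (Q × P) k)) (Finset.mem_univ q)
      rw [← hsplit]
      exact Ideal.mul_mem_right _ _ (X_mem_spanX _ hq)
    have h3 : 𝔭 = spanX k S := le_antisymm (hmin.2 ⟨spanX_isPrime _, h2⟩ h1) h1
    have hfin : S.Finite := Set.toFinite S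
    set T : Finset (Q × P) := hfin.toFinset with hT
    have hTcoe : (T : Set (Q × P)) = S := hfin.coe_toFinset
    have hheight : Order.height (⟨𝔭, hp⟩ : PrimeSpectrum (MvPolynomial (Q × P) k)) = (n : ℕ∞) := by
      rw [← idealHeight_of_isPrime hp]
      exact hht
    have hcard_le : T.card ≤ n := by
      have := le_height_of_X_mem (⟨𝔭, hp⟩ : PrimeSpectrum (MvPolynomial (Q × P) k)) T (by
        intro v hv
        have : v ∈ S := by rw [← hTcoe]; exact_mod_cast hv
        exact this)
      rw [hheight] at this
      exact_mod_cast this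
    -- surjectivity of the second projection
    have hsnd_surj : Function.Surjective (fun v : {x // x ∈ T} => (v : Q × P).2) := by
      intro p'
      obtain ⟨q, hq⟩ := h_cover_snd 𝔭 hp hpL p'
      have hmem : ((q : Q), p') ∈ T := by
        rw [← Finset.mem_coe, hTcoe]
        exact hq
      exact ⟨⟨(q, p'), hmem⟩, rfl⟩
    have hcard_ge : n ≤ T.card := by
      have := Fintype.card_le_of_surjective _ hsnd_surj
      rwa [Fintype.card_coe] at this
    have hcard : Fintype.card {x // x ∈ T} = Fintype.card P := by
      rw [Fintype.card_coe]
      omega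
    have hbij : Function.Bijective (fun v : {x // x ∈ T} => (v : Q × P).2) :=
      (Fintype.bijective_iff_surjective_and_card _).mpr ⟨hsnd_surj, hcard⟩
    set e := Equiv.ofBijective _ hbij with he
    set ψ : P → Q := fun p' => ((e.symm p' : {x // x ∈ T}) : Q × P).1 with hψdef
    have hesnd : ∀ p' : P, ((e.symm p' : {x // x ∈ T}) : Q × P).2 = p' := by
      intro p'
      exact e.apply_symm_apply p'
    have hgraph : ∀ p' : P, ((ψ p', p') : Q × P) ∈ T := by
      intro p'
      have : ((e.symm p' : {x // x ∈ T}) : Q × P) ∈ T := (e.symm p').2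
      rwa [show ((e.symm p' : {x // x ∈ T}) : Q × P) = (ψ p', p') from
        Prod.ext rfl (hesnd p')] at this
    have hS_eq : S = Set.range fun p' : P => ((ψ p', p') : Q × P) := by
      apply Set.eq_of_subset_of_subset
      · intro v hv
        have hvT : v ∈ T := by rw [← Finset.mem_coe, hTcoe]; exact hv
        have : e ⟨v, hvT⟩ = v.2 := rfl
        have h4 : e.symm v.2 = ⟨v, hvT⟩ := by
          rw [← this, Equiv.symm_apply_apply]
        refine ⟨v.2, ?_⟩
        show ((ψ v.2, v.2) : Q × P) = v
        rw [hψdef]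
        simp only [h4]
      · rintro _ ⟨p', rfl⟩
        rw [← hTcoe]
        exact_mod_cast hgraph p'
    have hψmono : Monotone ψ := by
      intro p₁ p₂ hp12
      by_contra hcon
      have hne : p₁ ≠ p₂ := fun h => hcon (h ▸ le_refl _)
      set φ : Q → P := fun q => if ψ p₁ ≤ q then p₂ else p₁ with hφdef
      have hφmono : Monotone φ := by
        intro a b hab
        by_cases ha : ψ p₁ ≤ a
        · rw [hφdef]
          simp only [if_pos ha, if_pos (le_trans ha hab)]
          exact le_refl _
        · by_cases hb : ψ p₁ ≤ b
          · rw [hφdef]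
            simp only [if_neg ha, if_pos hb]
            exact hp12
          · rw [hφdef]
            simp only [if_neg ha, if_neg hb]
            exact le_refl _
      obtain ⟨q, hq⟩ := h_primeVar 𝔭 hp hpL φ hφmono
      have hmem : ((q : Q), φ q) ∈ S := hq
      rw [hS_eq] at hmem
      obtain ⟨p'', hp''⟩ := hmem
      have hps : p'' = φ q := congrArg Prod.snd hp''
      have hqs : ψ (φ q) = q := by rw [← hps]; exact congrArg Prod.fst hp''
      by_cases hcase : ψ p₁ ≤ q
      · have hval : φ q = p₂ := by rw [hφdef]; simp only [if_pos hcase]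
        rw [hval] at hqs
        exact hcon (hqs ▸ hcase)
      · have hval : φ q = p₁ := by rw [hφdef]; simp only [if_neg hcase]
        rw [hval] at hqs
        exact hcase (le_of_eq hqs)
    refine ⟨ψ, hψmono, ?_⟩
    rw [hspan_eq, h3, hS_eq]
  · rintro ⟨ψ, hψ, rfl⟩
    refine ⟨(part3 ψ hψ).2, ?_⟩
    rw [hspan_eq]
    rw [idealHeight_of_isPrime (spanX_isPrime _)]
    exact h_height ψ
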